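/- Let (G, μ) be a σ-finite measure space, T > 0, η > 1, 1 ≤ p₀ < ∞ and 1 ≤ ρ < ∞, and set q := ηp₀ and r := ηρ. There exists a constant C_η > 0, depending only on η, such that for all measurable functions u, v : [0,T] × G → ℝ with ‖u‖_{L^r_t L^q_x} < ∞ and ‖v‖_{L^r_t L^q_x} < ∞, one has ‖ |u|^{η−1}u − |v|^{η−1}v ‖_{L^ρ_t L^{p₀}_x} ≤ C_η ‖u − v‖_{L^r_t L^q_x} ( ‖u‖_{L^r_t L^q_x} + ‖v‖_{L^r_t L^q_x} )^{η−1}. -/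

import Mathlib

open MeasureTheory Set
open scoped ENNReal NNReal

/-- Mixed space–time norm `‖u‖_{L^r_t L^a_x} = (∫₀ᵀ ‖u(t,·)‖_{L^a(G)}^r dt)^{1/r}`
(as an extended nonnegative real). -/
noncomputable def mixedNorm {G : Type*} [MeasurableSpace G] (μ : Measure G)
    (T a r : ℝ) (u : ℝ → G → ℝ) : ENNReal :=
  (∫⁻ t in Ioc (0:ℝ) T, (eLpNorm (u t) (ENNReal.ofReal a) μ) ^ r) ^ (1 / r)

private lemma tangent_le {η : ℝ} (hη : 1 ≤ η) {a b : ℝ} (ha : 0 ≤ a) (hb : 0 ≤ b)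
    (hba : b ≤ a) : a ^ η - b ^ η ≤ η * a ^ (η - 1) * (a - b) := by
  by_cases ha0 : a = 0
  · have hb0 : b = 0 := le_antisymm (ha0 ▸ hba) hb
    subst ha0; subst hb0
    simp [Real.zero_rpow (show η ≠ 0 by linarith)]
  · have h0 : 0 < a := lt_of_le_of_ne ha (Ne.symm ha0)
    have hz1 : -1 ≤ b / a - 1 := by
      have : 0 ≤ b / a := div_nonneg hb ha
      linarith
    have hber := one_add_mul_self_le_rpow_one_add hz1 hη
    have hpow : (1 + (b / a - 1)) ^ η = b ^ η / a ^ η := by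
      rw [show (1 : ℝ) + (b / a - 1) = b / a by ring, Real.div_rpow hb ha]
    have hA : 0 < a ^ η := Real.rpow_pos_of_pos h0 η
    have h1 : (1 + η * (b / a - 1)) * a ^ η ≤ b ^ η := by
      calc (1 + η * (b / a - 1)) * a ^ η ≤ (1 + (b / a - 1)) ^ η * a ^ η :=
            mul_le_mul_of_nonneg_right hber hA.le
        _ = b ^ η := by rw [hpow]; field_simp
    have hae : a ^ η = a ^ (η - 1) * a := by
      rw [← Real.rpow_add_one h0.ne' (η - 1)]
      norm_num
    have key : η * (b / a - 1) * a ^ η = η * (b - a) * a ^ (η - 1) := by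
      rw [hae]; field_simp
    have e1 : (1 + η * (b / a - 1)) * a ^ η = a ^ η + η * (b / a - 1) * a ^ η := by ring
    have e2 : η * (b - a) * a ^ (η - 1) = -(η * a ^ (η - 1) * (a - b)) := by ring
    linarith

private lemma rpow_sub_one_mul {η : ℝ} (hη : 1 < η) {t : ℝ} (ht : 0 ≤ t) :
    t ^ (η - 1) * t = t ^ η := by
  rcases eq_or_lt_of_le ht with h0 | h0
  · rw [← h0, Real.zero_rpow (by linarith), Real.zero_rpow (by linarith), zero_mul]
  · rw [← Real.rpow_add_one h0.ne' (η - 1)]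
    norm_num

private lemma core_ineq {η : ℝ} (hη : 1 < η) {x y : ℝ} (hx : 0 ≤ x) (hxy : |y| ≤ x) :
    |x| ^ (η - 1) * x - |y| ^ (η - 1) * y ≤ η * ( |x| + |y|) ^ (η - 1) * (x - y) := by
  have hη1 : (0:ℝ) ≤ η - 1 := by linarith
  have hax : |x| = x := abs_of_nonneg hx
  rcases le_or_gt 0 y with hy | hy
  · have hay : |y| = y := abs_of_nonneg hy
    rw [hax, hay]
    rw [rpow_sub_one_mul hη hx, rpow_sub_one_mul hη hy]
    have h3 := tangent_le hη.le hx hy (hay ▸ hxy)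
    have h4 : x ^ (η - 1) ≤ (x + y) ^ (η - 1) :=
      Real.rpow_le_rpow hx (by linarith) hη1
    have hxy' : (0:ℝ) ≤ x - y := by
      have := le_abs_self y
      linarith [hay ▸ hxy]
    have h5 := mul_le_mul_of_nonneg_left (mul_le_mul_of_nonneg_right h4 hxy')
      (show (0:ℝ) ≤ η by linarith)
    linarith
  · have hay : |y| = -y := abs_of_neg hy
    rw [hax, hay]
    have hny : (0:ℝ) ≤ -y := by linarith
    have h1 : x ^ (η - 1) * x = x ^ η := rpow_sub_one_mul hη hx
    have h2 : (-y) ^ (η - 1) * (-y) = (-y) ^ η := rpow_sub_one_mul hη hny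
    have hxle : x ≤ x - y := by linarith
    have hyle : -y ≤ x - y := by linarith
    have hxy0 : (0:ℝ) ≤ x - y := by linarith
    have h5 : x ^ η ≤ (x - y) ^ (η - 1) * x := by
      rw [← h1]; exact mul_le_mul_of_nonneg_right (Real.rpow_le_rpow hx hxle hη1) hx
    have h6 : (-y) ^ η ≤ (x - y) ^ (η - 1) * (-y) := by
      rw [← h2]; exact mul_le_mul_of_nonneg_right (Real.rpow_le_rpow hny hyle hη1) hny
    have h7 : (x - y) ^ (η - 1) * x + (x - y) ^ (η - 1) * (-y)
        = (x - y) ^ (η - 1) * (x - y) := by ring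
    have h8 : (x - y) ^ (η - 1) * (x - y) ≤ η * ((x - y) ^ (η - 1) * (x - y)) :=
      le_mul_of_one_le_left (mul_nonneg (Real.rpow_nonneg hxy0 _) hxy0) hη.le
    have e : x + -y = x - y := by ring
    rw [e]
    linarith

private lemma ptwise_abs {η : ℝ} (hη : 1 < η) (x y : ℝ) :
    |( |x| ^ (η - 1) * x - |y| ^ (η - 1) * y)| ≤ η * ( |x| + |y|) ^ (η - 1) * |x - y| := by
  have hη1 : (0:ℝ) ≤ η - 1 := by linarith
  have H : ∀ a b : ℝ, |a| ^ (η - 1) * a - |b| ^ (η - 1) * b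
      ≤ η * ( |a| + |b|) ^ (η - 1) * |a - b| := by
    intro a b
    rcases le_total |b| |a| with hba | hab
    · rcases le_or_gt 0 a with ha | ha
      · have haa : |a| = a := abs_of_nonneg ha
        calc |a| ^ (η - 1) * a - |b| ^ (η - 1) * b
            ≤ η * ( |a| + |b|) ^ (η - 1) * (a - b) := core_ineq hη ha (haa ▸ hba)
          _ ≤ η * ( |a| + |b|) ^ (η - 1) * |a - b| :=
              mul_le_mul_of_nonneg_left (le_abs_self _) (by positivity)
      · have e1 : |a| ^ (η - 1) * a = -( |a| ^ η) := by
          rw [← rpow_sub_one_mul hη (abs_nonneg a), abs_of_nonpos ha.le]; ring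
        have e2 : -( |b| ^ (η - 1) * b) ≤ |b| ^ η := by
          rw [← rpow_sub_one_mul hη (abs_nonneg b)]
          have := mul_le_mul_of_nonneg_left (neg_le_abs b)
            (Real.rpow_nonneg (abs_nonneg b) (η - 1))
          linarith
        have e3 : |b| ^ η ≤ |a| ^ η := Real.rpow_le_rpow (abs_nonneg b) hba (by linarith)
        have h0 : |a| ^ (η - 1) * a - |b| ^ (η - 1) * b ≤ 0 := by linarith
        exact h0.trans (by positivity)
    · rcases le_or_gt 0 b with hb | hb
      · have e1 : |b| ^ (η - 1) * b = |b| ^ η := by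
          rw [abs_of_nonneg hb]; exact rpow_sub_one_mul hη hb
        have e2 : |a| ^ (η - 1) * a ≤ |a| ^ η := by
          rw [← rpow_sub_one_mul hη (abs_nonneg a)]
          exact mul_le_mul_of_nonneg_left (le_abs_self a)
            (Real.rpow_nonneg (abs_nonneg a) _)
        have e3 : |a| ^ η ≤ |b| ^ η := Real.rpow_le_rpow (abs_nonneg a) hab (by linarith)
        have h0 : |a| ^ (η - 1) * a - |b| ^ (η - 1) * b ≤ 0 := by linarith
        exact h0.trans (by positivity)
      · have hb' : (0:ℝ) ≤ -b := by linarith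
        have hab' : |-a| ≤ -b := by
          rw [abs_neg]; rw [abs_of_neg hb] at hab; exact hab
        have hc := core_ineq hη hb' hab'
        rw [abs_neg, abs_neg] at hc
        calc |a| ^ (η - 1) * a - |b| ^ (η - 1) * b
            = |b| ^ (η - 1) * (-b) - |a| ^ (η - 1) * (-a) := by ring
          _ ≤ η * ( |b| + |a|) ^ (η - 1) * (-b - -a) := hc
          _ = η * ( |a| + |b|) ^ (η - 1) * (a - b) := by rw [add_comm |b| |a|]; ring
          _ ≤ η * ( |a| + |b|) ^ (η - 1) * |a - b| :=
              mul_le_mul_of_nonneg_left (le_abs_self _) (by positivity)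
  rw [abs_sub_le_iff]
  refine ⟨H x y, ?_⟩
  have h := H y x
  rw [add_comm |y| |x|, abs_sub_comm y x] at h
  exact h

private lemma ptwise_ennreal {η : ℝ} (hη : 1 < η) (x y : ℝ) :
    (‖( |x| ^ (η - 1) * x - |y| ^ (η - 1) * y)‖₊ : ℝ≥0∞) ≤
      ENNReal.ofReal η * ((‖x - y‖₊ : ℝ≥0∞) * ((‖x‖₊ : ℝ≥0∞) + (‖y‖₊ : ℝ≥0∞)) ^ (η - 1)) := by
  have hη1 : (0:ℝ) ≤ η - 1 := by linarith
  calc (‖( |x| ^ (η - 1) * x - |y| ^ (η - 1) * y)‖₊ : ℝ≥0∞)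
      = ENNReal.ofReal |( |x| ^ (η - 1) * x - |y| ^ (η - 1) * y)| :=
        Real.enorm_eq_ofReal_abs _
    _ ≤ ENNReal.ofReal (η * ( |x| + |y|) ^ (η - 1) * |x - y|) :=
        ENNReal.ofReal_le_ofReal (ptwise_abs hη x y)
    _ = ENNReal.ofReal η * (ENNReal.ofReal |x - y| *
          ENNReal.ofReal (( |x| + |y|) ^ (η - 1))) := by
        rw [ENNReal.ofReal_mul (by positivity), ENNReal.ofReal_mul (by positivity), mul_assoc,
          mul_comm (ENNReal.ofReal (( |x| + |y| ) ^ (η - 1)))]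
    _ = ENNReal.ofReal η * ((‖x - y‖₊ : ℝ≥0∞) * ((‖x‖₊ : ℝ≥0∞) + (‖y‖₊ : ℝ≥0∞)) ^ (η - 1)) := by
        rw [← ENNReal.ofReal_rpow_of_nonneg (by positivity) hη1,
          ENNReal.ofReal_add (abs_nonneg x) (abs_nonneg y),
          ← Real.enorm_eq_ofReal_abs, ← Real.enorm_eq_ofReal_abs,
          ← Real.enorm_eq_ofReal_abs]
        rfl

private lemma Measurable.ennrpow_const {α : Type*} [MeasurableSpace α] {f : α → ℝ≥0∞}
    (hf : Measurable f) (c : ℝ) : Measurable fun x => f x ^ c :=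
  ENNReal.continuous_rpow_const.measurable.comp hf

private lemma eLpNorm_ofReal {α : Type*} [MeasurableSpace α] (μ : Measure α) {a : ℝ}
    (ha : 0 < a) (f : α → ℝ) :
    eLpNorm f (ENNReal.ofReal a) μ = (∫⁻ x, (‖f x‖₊ : ℝ≥0∞) ^ a ∂μ) ^ (1 / a) := by
  rw [eLpNorm_eq_lintegral_rpow_enorm_toReal
    (by simp only [ne_eq, ENNReal.ofReal_eq_zero, not_le]; exact ha) ENNReal.ofReal_ne_top,
    ENNReal.toReal_ofReal ha.le]
  rfl

private lemma hoelder_step {α : Type*} [MeasurableSpace α] (μ : Measure α) {η : ℝ}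
    (hη : 1 < η) {c : ℝ} (hc : 0 < c) (f g : α → ℝ≥0∞)
    (hf : Measurable f) (hg : Measurable g) :
    ∫⁻ x, f x ^ c * g x ^ ((η - 1) * c) ∂μ ≤
      (∫⁻ x, f x ^ (η * c) ∂μ) ^ (1 / η) * (∫⁻ x, g x ^ (η * c) ∂μ) ^ ((η - 1) / η) := by
  have hη0 : η ≠ 0 := by linarith
  have hη1 : η - 1 ≠ 0 := by intro h; apply absurd hη; simp [show η = 1 by linarith]
  have hcon : Real.HolderConjugate η (η / (η - 1)) :=
    (Real.holderConjugate_iff_eq_conjExponent hη).2 rfl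
  have h := ENNReal.lintegral_mul_le_Lp_mul_Lq μ hcon
    ((hf.ennrpow_const c).aemeasurable) ((hg.ennrpow_const ((η - 1) * c)).aemeasurable)
  simp only [Pi.mul_apply] at h
  have e1 : c * η = η * c := mul_comm _ _
  have e2 : (η - 1) * c * (η / (η - 1)) = η * c := by field_simp
  have e3 : 1 / (η / (η - 1)) = (η - 1) / η := one_div_div _ _
  simp_rw [← ENNReal.rpow_mul, e1, e2, e3] at h
  exact h

private lemma double_holder {α β : Type*} [MeasurableSpace α] [MeasurableSpace β]
    (ν : Measure α) (μ : Measure β) [SFinite μ] {η p₀ ρ : ℝ}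
    (hη : 1 < η) (hp₀ : 0 < p₀) (hρ : 0 < ρ) {D S : α → β → ℝ≥0∞}
    (hD : Measurable (Function.uncurry D)) (hS : Measurable (Function.uncurry S)) :
    (∫⁻ t, (∫⁻ x, (D t x * S t x ^ (η - 1)) ^ p₀ ∂μ) ^ (ρ / p₀) ∂ν) ^ (1 / ρ) ≤
      (∫⁻ t, (∫⁻ x, D t x ^ (η * p₀) ∂μ) ^ (η * ρ / (η * p₀)) ∂ν) ^ (1 / (η * ρ)) *
      ((∫⁻ t, (∫⁻ x, S t x ^ (η * p₀) ∂μ) ^ (η * ρ / (η * p₀)) ∂ν) ^ (1 / (η * ρ))) ^ (η - 1) := by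
  have hη0 : (0:ℝ) < η := by linarith
  have hη1 : (0:ℝ) ≤ η - 1 := by linarith
  have hA : Measurable fun t => ∫⁻ x, D t x ^ (η * p₀) ∂μ :=
    (hD.ennrpow_const (η * p₀)).lintegral_prod_right'
  have hB : Measurable fun t => ∫⁻ x, S t x ^ (η * p₀) ∂μ :=
    (hS.ennrpow_const (η * p₀)).lintegral_prod_right'
  have key2 : ∀ t, (∫⁻ x, (D t x * S t x ^ (η - 1)) ^ p₀ ∂μ) ^ (ρ / p₀) ≤
      (∫⁻ x, D t x ^ (η * p₀) ∂μ) ^ (ρ / (η * p₀)) *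
      (∫⁻ x, S t x ^ (η * p₀) ∂μ) ^ ((η - 1) * (ρ / (η * p₀))) := by
    intro t
    have key1 : ∫⁻ x, (D t x * S t x ^ (η - 1)) ^ p₀ ∂μ ≤
        (∫⁻ x, D t x ^ (η * p₀) ∂μ) ^ (1 / η) *
        (∫⁻ x, S t x ^ (η * p₀) ∂μ) ^ ((η - 1) / η) := by
      have hpt : ∀ x, (D t x * S t x ^ (η - 1)) ^ p₀
          = D t x ^ p₀ * S t x ^ ((η - 1) * p₀) := by
        intro x
        rw [ENNReal.mul_rpow_of_nonneg _ _ hp₀.le, ← ENNReal.rpow_mul]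
      simp_rw [hpt]
      exact hoelder_step μ hη hp₀ _ _ hD.of_uncurry_left hS.of_uncurry_left
    calc (∫⁻ x, (D t x * S t x ^ (η - 1)) ^ p₀ ∂μ) ^ (ρ / p₀)
        ≤ ((∫⁻ x, D t x ^ (η * p₀) ∂μ) ^ (1 / η) *
            (∫⁻ x, S t x ^ (η * p₀) ∂μ) ^ ((η - 1) / η)) ^ (ρ / p₀) :=
          ENNReal.rpow_le_rpow key1 (by positivity)
      _ = _ := by
          rw [ENNReal.mul_rpow_of_nonneg _ _ (by positivity : (0:ℝ) ≤ ρ / p₀),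
            ← ENNReal.rpow_mul, ← ENNReal.rpow_mul]
          congr 2
          · field_simp
          · field_simp
  calc (∫⁻ t, (∫⁻ x, (D t x * S t x ^ (η - 1)) ^ p₀ ∂μ) ^ (ρ / p₀) ∂ν) ^ (1 / ρ)
      ≤ (∫⁻ t, (∫⁻ x, D t x ^ (η * p₀) ∂μ) ^ (ρ / (η * p₀)) *
          (∫⁻ x, S t x ^ (η * p₀) ∂μ) ^ ((η - 1) * (ρ / (η * p₀))) ∂ν) ^ (1 / ρ) :=
        ENNReal.rpow_le_rpow (lintegral_mono key2) (by positivity)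
    _ ≤ ((∫⁻ t, (∫⁻ x, D t x ^ (η * p₀) ∂μ) ^ (η * (ρ / (η * p₀))) ∂ν) ^ (1 / η) *
          (∫⁻ t, (∫⁻ x, S t x ^ (η * p₀) ∂μ) ^ (η * (ρ / (η * p₀))) ∂ν) ^ ((η - 1) / η)) ^ (1 / ρ) :=
        ENNReal.rpow_le_rpow
          (hoelder_step ν hη (by positivity) _ _ hA hB) (by positivity)
    _ = _ := by
        rw [ENNReal.mul_rpow_of_nonneg _ _ (by positivity : (0:ℝ) ≤ 1 / ρ),
          ← ENNReal.rpow_mul, ← ENNReal.rpow_mul]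
        have e3 : η * (ρ / (η * p₀)) = η * ρ / (η * p₀) := by ring
        have e4 : 1 / η * (1 / ρ) = 1 / (η * ρ) := by
          rw [div_mul_div_comm, one_mul]
        have e5 : (η - 1) / η * (1 / ρ) = 1 / (η * ρ) * (η - 1) := by
          field_simp
        rw [e3, e4, e5, ENNReal.rpow_mul]

private lemma minkowski_mixed {α β : Type*} [MeasurableSpace α] [MeasurableSpace β]
    (ν : Measure α) (μ : Measure β) [SFinite μ] {q r : ℝ} (hq : 1 ≤ q) (hr : 1 ≤ r)
    {f g : α → β → ℝ≥0∞}
    (hf : Measurable (Function.uncurry f)) (hg : Measurable (Function.uncurry g)) :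
    (∫⁻ t, (∫⁻ x, (f t x + g t x) ^ q ∂μ) ^ (r / q) ∂ν) ^ (1 / r) ≤
      (∫⁻ t, (∫⁻ x, f t x ^ q ∂μ) ^ (r / q) ∂ν) ^ (1 / r) +
      (∫⁻ t, (∫⁻ x, g t x ^ q ∂μ) ^ (r / q) ∂ν) ^ (1 / r) := by
  have hq0 : (0:ℝ) < q := by linarith
  have hr0 : (0:ℝ) < r := by linarith
  have hA : Measurable fun t => (∫⁻ x, f t x ^ q ∂μ) ^ (1 / q) :=
    ((hf.ennrpow_const q).lintegral_prod_right').ennrpow_const (1 / q)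
  have hB : Measurable fun t => (∫⁻ x, g t x ^ q ∂μ) ^ (1 / q) :=
    ((hg.ennrpow_const q).lintegral_prod_right').ennrpow_const (1 / q)
  have inner : ∀ t, (∫⁻ x, (f t x + g t x) ^ q ∂μ) ^ (r / q) ≤
      ((∫⁻ x, f t x ^ q ∂μ) ^ (1 / q) + (∫⁻ x, g t x ^ q ∂μ) ^ (1 / q)) ^ r := by
    intro t
    have h := ENNReal.lintegral_Lp_add_le (μ := μ)
      (hf.of_uncurry_left (x := t)).aemeasurable (hg.of_uncurry_left (x := t)).aemeasurable hq
    simp only [Pi.add_apply] at h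
    calc (∫⁻ x, (f t x + g t x) ^ q ∂μ) ^ (r / q)
        = ((∫⁻ x, (f t x + g t x) ^ q ∂μ) ^ (1 / q)) ^ r := by
          rw [← ENNReal.rpow_mul]
          congr 1
          field_simp
      _ ≤ _ := ENNReal.rpow_le_rpow h hr0.le
  calc (∫⁻ t, (∫⁻ x, (f t x + g t x) ^ q ∂μ) ^ (r / q) ∂ν) ^ (1 / r)
      ≤ (∫⁻ t, ((∫⁻ x, f t x ^ q ∂μ) ^ (1 / q) + (∫⁻ x, g t x ^ q ∂μ) ^ (1 / q)) ^ r ∂ν)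
          ^ (1 / r) :=
        ENNReal.rpow_le_rpow (lintegral_mono inner) (by positivity)
    _ ≤ (∫⁻ t, ((∫⁻ x, f t x ^ q ∂μ) ^ (1 / q)) ^ r ∂ν) ^ (1 / r) +
        (∫⁻ t, ((∫⁻ x, g t x ^ q ∂μ) ^ (1 / q)) ^ r ∂ν) ^ (1 / r) := by
        have h := ENNReal.lintegral_Lp_add_le (μ := ν) hA.aemeasurable hB.aemeasurable hr
        simp only [Pi.add_apply] at h
        exact h
    _ = _ := by
        simp_rw [← ENNReal.rpow_mul, show 1 / q * r = r / q by field_simp]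

/-- Double-Hölder estimate for the power nonlinearity: for `η > 1` there is `C_η > 0`,
depending only on `η`, such that for `q = ηp₀`, `r = ηρ` and all measurable `u, v` with finite
mixed norms, `‖|u|^{η-1}u - |v|^{η-1}v‖_{L^ρ_t L^{p₀}_x} ≤ C_η ‖u-v‖_{L^r_t L^q_x}
(‖u‖_{L^r_t L^q_x} + ‖v‖_{L^r_t L^q_x})^{η-1}`. -/
theorem stmt7.{u_1} (η : ℝ) (hη : 1 < η) :
    ∃ C > (0:ℝ), ∀ (G : Type u_1) (mG : MeasurableSpace G) (μ : Measure G), SigmaFinite μ →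
      ∀ T p₀ ρ : ℝ, 0 < T → 1 ≤ p₀ → 1 ≤ ρ →
      ∀ u v : ℝ → G → ℝ,
      Measurable (Function.uncurry u) → Measurable (Function.uncurry v) →
      mixedNorm μ T (η * p₀) (η * ρ) u < ⊤ →
      mixedNorm μ T (η * p₀) (η * ρ) v < ⊤ →
      mixedNorm μ T p₀ ρ
          (fun t x => |u t x| ^ (η - 1) * u t x - |v t x| ^ (η - 1) * v t x)
        ≤ ENNReal.ofReal C * mixedNorm μ T (η * p₀) (η * ρ) (fun t x => u t x - v t x)
            * (mixedNorm μ T (η * p₀) (η * ρ) u + mixedNorm μ T (η * p₀) (η * ρ) v)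
              ^ (η - 1) := by
  have hη0 : (0:ℝ) < η := by linarith
  have hη1 : (0:ℝ) ≤ η - 1 := by linarith
  refine ⟨η, hη0, ?_⟩
  intro G mG μ hσ T p₀ ρ hT hp₀ hρ u v hu hv _ _
  haveI := hσ
  have hp₀0 : (0:ℝ) < p₀ := by linarith
  have hρ0 : (0:ℝ) < ρ := by linarith
  have hq0 : (0:ℝ) < η * p₀ := by positivity
  have hr0 : (0:ℝ) < η * ρ := by positivity
  have hq1 : (1:ℝ) ≤ η * p₀ := by nlinarith
  have hr1 : (1:ℝ) ≤ η * ρ := by nlinarith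
  have hD : Measurable (Function.uncurry fun t x => (‖u t x - v t x‖₊ : ℝ≥0∞)) :=
    (hu.sub hv).enorm
  have hS : Measurable
      (Function.uncurry fun t x => (‖u t x‖₊ : ℝ≥0∞) + (‖v t x‖₊ : ℝ≥0∞)) :=
    hu.enorm.add hv.enorm
  have eD : mixedNorm μ T (η * p₀) (η * ρ) (fun t x => u t x - v t x) =
      (∫⁻ t in Ioc (0:ℝ) T,
        (∫⁻ x, (‖u t x - v t x‖₊ : ℝ≥0∞) ^ (η * p₀) ∂μ) ^ (η * ρ / (η * p₀)))
        ^ (1 / (η * ρ)) := by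
    simp_rw [mixedNorm, eLpNorm_ofReal μ hq0, ← ENNReal.rpow_mul,
      show 1 / (η * p₀) * (η * ρ) = η * ρ / (η * p₀) by ring]
  have eU : mixedNorm μ T (η * p₀) (η * ρ) u =
      (∫⁻ t in Ioc (0:ℝ) T,
        (∫⁻ x, (‖u t x‖₊ : ℝ≥0∞) ^ (η * p₀) ∂μ) ^ (η * ρ / (η * p₀))) ^ (1 / (η * ρ)) := by
    simp_rw [mixedNorm, eLpNorm_ofReal μ hq0, ← ENNReal.rpow_mul,
      show 1 / (η * p₀) * (η * ρ) = η * ρ / (η * p₀) by ring]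
  have eV : mixedNorm μ T (η * p₀) (η * ρ) v =
      (∫⁻ t in Ioc (0:ℝ) T,
        (∫⁻ x, (‖v t x‖₊ : ℝ≥0∞) ^ (η * p₀) ∂μ) ^ (η * ρ / (η * p₀))) ^ (1 / (η * ρ)) := by
    simp_rw [mixedNorm, eLpNorm_ofReal μ hq0, ← ENNReal.rpow_mul,
      show 1 / (η * p₀) * (η * ρ) = η * ρ / (η * p₀) by ring]
  calc mixedNorm μ T p₀ ρ (fun t x => |u t x| ^ (η - 1) * u t x - |v t x| ^ (η - 1) * v t x)
      = (∫⁻ t in Ioc (0:ℝ) T,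
          (∫⁻ x, (‖( |u t x| ^ (η - 1) * u t x - |v t x| ^ (η - 1) * v t x)‖₊ : ℝ≥0∞) ^ p₀ ∂μ)
            ^ (ρ / p₀)) ^ (1 / ρ) := by
        simp_rw [mixedNorm, eLpNorm_ofReal μ hp₀0, ← ENNReal.rpow_mul,
          show 1 / p₀ * ρ = ρ / p₀ by ring]
    _ ≤ (∫⁻ t in Ioc (0:ℝ) T,
          ((ENNReal.ofReal η) ^ p₀ *
            ∫⁻ x, ((‖u t x - v t x‖₊ : ℝ≥0∞) *
              ((‖u t x‖₊ : ℝ≥0∞) + (‖v t x‖₊ : ℝ≥0∞)) ^ (η - 1)) ^ p₀ ∂μ)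
            ^ (ρ / p₀)) ^ (1 / ρ) := by
        refine ENNReal.rpow_le_rpow (lintegral_mono fun t =>
          ENNReal.rpow_le_rpow ?_ (by positivity)) (by positivity)
        rw [← lintegral_const_mul' _ _
          (ENNReal.rpow_ne_top_of_nonneg hp₀0.le ENNReal.ofReal_ne_top)]
        refine lintegral_mono fun x => ?_
        rw [← ENNReal.mul_rpow_of_nonneg _ _ hp₀0.le]
        exact ENNReal.rpow_le_rpow (ptwise_ennreal hη _ _) hp₀0.le
    _ = ENNReal.ofReal η * (∫⁻ t in Ioc (0:ℝ) T,
          (∫⁻ x, ((‖u t x - v t x‖₊ : ℝ≥0∞) *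
            ((‖u t x‖₊ : ℝ≥0∞) + (‖v t x‖₊ : ℝ≥0∞)) ^ (η - 1)) ^ p₀ ∂μ)
            ^ (ρ / p₀)) ^ (1 / ρ) := by
        simp_rw [ENNReal.mul_rpow_of_nonneg _ _ (show (0:ℝ) ≤ ρ / p₀ by positivity),
          ← ENNReal.rpow_mul, show p₀ * (ρ / p₀) = ρ by field_simp]
        rw [lintegral_const_mul' _ _
          (ENNReal.rpow_ne_top_of_nonneg hρ0.le ENNReal.ofReal_ne_top),
          ENNReal.mul_rpow_of_nonneg _ _ (show (0:ℝ) ≤ 1 / ρ by positivity),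
          ← ENNReal.rpow_mul, show ρ * (1 / ρ) = 1 by field_simp, ENNReal.rpow_one]
    _ ≤ ENNReal.ofReal η *
          ((∫⁻ t in Ioc (0:ℝ) T,
            (∫⁻ x, (‖u t x - v t x‖₊ : ℝ≥0∞) ^ (η * p₀) ∂μ) ^ (η * ρ / (η * p₀)))
              ^ (1 / (η * ρ)) *
          ((∫⁻ t in Ioc (0:ℝ) T,
            (∫⁻ x, ((‖u t x‖₊ : ℝ≥0∞) + (‖v t x‖₊ : ℝ≥0∞)) ^ (η * p₀) ∂μ)
              ^ (η * ρ / (η * p₀))) ^ (1 / (η * ρ))) ^ (η - 1)) :=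
        mul_le_mul_right (double_holder _ μ hη hp₀0 hρ0 hD hS) _
    _ = ENNReal.ofReal η * mixedNorm μ T (η * p₀) (η * ρ) (fun t x => u t x - v t x) *
          ((∫⁻ t in Ioc (0:ℝ) T,
            (∫⁻ x, ((‖u t x‖₊ : ℝ≥0∞) + (‖v t x‖₊ : ℝ≥0∞)) ^ (η * p₀) ∂μ)
              ^ (η * ρ / (η * p₀))) ^ (1 / (η * ρ))) ^ (η - 1) := by
        rw [eD, mul_assoc]
    _ ≤ ENNReal.ofReal η * mixedNorm μ T (η * p₀) (η * ρ) (fun t x => u t x - v t x) *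
          (mixedNorm μ T (η * p₀) (η * ρ) u + mixedNorm μ T (η * p₀) (η * ρ) v) ^ (η - 1) := by
        refine mul_le_mul_right (ENNReal.rpow_le_rpow ?_ hη1) _
        rw [eU, eV]
        exact minkowski_mixed _ μ hq1 hr1 hu.enorm hv.enorm
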